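/- Let x, y ∈ ℤ, let S be a finite set of functions f_i(z) = a_i·z + b_i with a_i, b_i ∈ ℤ and a_i ≠ 0, let k ∈ ℤ with k ≠ 0, let g(z) = z + k, and let F = S ∪ {g}. If there exists an S-composition G = (f_{e_1}, …, f_{e_K}) with G(x) ≡ y (mod k) such that a_{e_j} < 0 for some j, then x →_F y. -/
import Mathlib


/-- Apply the composition given by the tuple `L = (f₁, …, f_K)` of affine functions
(encoded by coefficient pairs `(a, b)`, i.e. `z ↦ a·z + b`), viewed as `f_K ∘ ⋯ ∘ f₁`. -/
def applyComp (L : List (ℤ × ℤ)) (x : ℤ) : ℤ := L.foldl (fun z p => p.1 * z + p.2) x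

lemma applyComp_append (L1 L2 : List (ℤ × ℤ)) (x : ℤ) :
    applyComp (L1 ++ L2) x = applyComp L2 (applyComp L1 x) := by
  simp [applyComp, List.foldl_append]

lemma applyComp_replicate (n : ℕ) (k x : ℤ) :
    applyComp (List.replicate n (1, k)) x = x + n * k := by
  induction n generalizing x with
  | zero => simp [applyComp]
  | succ n ih =>
    rw [List.replicate_succ]
    show applyComp ((1, k) :: List.replicate n (1, k)) x = _
    simp only [applyComp, List.foldl_cons] at *
    rw [ih]
    push_cast
    ring

lemma applyComp_shift (L : List (ℤ × ℤ)) (z d : ℤ) :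
    applyComp L (z + d) = applyComp L z + (L.map Prod.fst).prod * d := by
  induction L generalizing z d with
  | nil => simp [applyComp]
  | cons p L ih =>
    simp only [applyComp, List.foldl_cons, List.map_cons, List.prod_cons] at *
    have : p.1 * (z + d) + p.2 = (p.1 * z + p.2) + p.1 * d := by ring
    rw [this, ih]
    ring

lemma exists_last_neg (G : List (ℤ × ℤ)) (h : ∃ p ∈ G, p.1 < 0) :
    ∃ G₁ p G₂, G = G₁ ++ p :: G₂ ∧ p.1 < 0 ∧ ∀ q ∈ G₂, ¬ q.1 < 0 := by
  induction G with
  | nil => simp at h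
  | cons a G ih =>
    by_cases hG : ∃ p ∈ G, p.1 < 0
    · obtain ⟨G₁, p, G₂, rfl, hp, hG₂⟩ := ih hG
      exact ⟨a :: G₁, p, G₂, rfl, hp, hG₂⟩
    · push_neg at hG
      obtain ⟨p, hp, hpneg⟩ := h
      rcases List.mem_cons.mp hp with rfl | hp'
      · exact ⟨[], p, G, rfl, hpneg, fun q hq => not_lt.mpr (hG q hq)⟩
      · exact absurd hpneg (not_lt.mpr (hG p hp'))

/-- Case (C): if some `S`-composition `G` with `G(x) ≡ y (mod k)` contains a function with
negative linear coefficient, then some `F`-composition maps `x` to `y`, where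
`F = S ∪ {g}` with `g(z) = z + k` (encoded as the pair `(1, k)`). -/
theorem case_negative_coeff (x y : ℤ) (S : Finset (ℤ × ℤ)) (hS : ∀ p ∈ S, p.1 ≠ 0)
    (k : ℤ) (hk : k ≠ 0)
    (hex : ∃ G : List (ℤ × ℤ), (∀ p ∈ G, p ∈ S) ∧ applyComp G x ≡ y [ZMOD k] ∧
      ∃ p ∈ G, p.1 < 0) :
    ∃ G : List (ℤ × ℤ), (∀ p ∈ G, p ∈ insert ((1 : ℤ), k) S) ∧ applyComp G x = y := by
  obtain ⟨G, hGS, hmod, hneg⟩ := hex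
  obtain ⟨G₁, p, G₂, rfl, hpneg, hG₂⟩ := exists_last_neg G hneg
  -- all coefficients in G₂ are positive
  have hG₂pos : ∀ q ∈ G₂, 0 < q.1 := by
    intro q hq
    have h1 : q.1 ≠ 0 := hS q (hGS q (by simp [hq]))
    have h2 := hG₂ q hq
    omega
  set A : ℤ := (G₂.map Prod.fst).prod with hA
  have hApos : 0 < A := by
    apply List.prod_pos
    intro a ha
    obtain ⟨q, hq, rfl⟩ := List.mem_map.mp ha
    exact hG₂pos q hq
  set c : ℤ := p.1 * A with hc
  have hcneg : c ≤ -1 := by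
    have : p.1 * A ≤ -1 * A := by
      apply mul_le_mul_of_nonneg_right (by omega) (le_of_lt hApos)
    nlinarith
  -- y = v + k * m
  set v : ℤ := applyComp (G₁ ++ p :: G₂) x with hv
  have hdvd : k ∣ y - v := (Int.modEq_iff_dvd.mp hmod)
  obtain ⟨m, hm⟩ := hdvd
  -- choose t, s
  set t : ℕ := m.natAbs with ht
  have hct : c * t ≤ m := by
    have h1 : c * (t : ℤ) ≤ -1 * t := mul_le_mul_of_nonneg_right hcneg (by positivity)
    have h2 : -(t : ℤ) ≤ m := by rw [ht]; omega
    omega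
  set s : ℕ := (m - c * t).toNat with hs
  have hsval : (s : ℤ) = m - c * t := Int.toNat_of_nonneg (by linarith)
  refine ⟨G₁ ++ List.replicate t (1, k) ++ p :: G₂ ++ List.replicate s (1, k), ?_, ?_⟩
  · intro q hq
    simp only [List.mem_append, List.mem_cons, List.mem_replicate] at hq
    rcases hq with ((hq | hq) | hq) | hq
    · exact Finset.mem_insert_of_mem (hGS q (by simp [hq]))
    · simp [hq.2]
    · rcases hq with rfl | hq
      · exact Finset.mem_insert_of_mem (hGS q (by simp))
      · exact Finset.mem_insert_of_mem (hGS q (by simp [hq]))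
    · simp [hq.2]
  · have key : applyComp (p :: G₂) (applyComp G₁ x + t * k)
        = applyComp (p :: G₂) (applyComp G₁ x) + c * (t * k) := by
      have := applyComp_shift (p :: G₂) (applyComp G₁ x) (t * k)
      simpa [List.map_cons, List.prod_cons, ← hA, hc, mul_assoc] using this
    have hv' : applyComp (p :: G₂) (applyComp G₁ x) = v := by
      rw [hv, applyComp_append]
    have e1 : G₁ ++ List.replicate t (1, k) ++ p :: G₂ ++ List.replicate s (1, k)
        = ((G₁ ++ List.replicate t (1, k)) ++ (p :: G₂)) ++ List.replicate s (1, k) := by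
      simp
    rw [e1, applyComp_append, applyComp_append, applyComp_append, applyComp_replicate,
      applyComp_replicate, key, hv', hsval]
    have : y = v + k * m := by omega
    rw [this]
    ring
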